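/- Fix dt ∈ ℝ and let F be the 5×5 real matrix equal to the identity except that its (4,5) entry equals dt. Define Φ_dt on 5×5 real matrices by Φ_dt(A) = F⁻¹ A F. Then: (a) for every matrix T of SE_2(3) block form with blocks (R, v, x), Φ_dt(T) is again of SE_2(3) block form, with blocks (R, v, x + dt·v); (b) Φ_dt(T₁T₂) = Φ_dt(T₁)Φ_dt(T₂) for all T₁, T₂; and (c) Φ_dt ∘ Φ_{−dt} = id. Hence Φ_dt restricts to a group automorphism of SE_2(3). -/

import Mathlib

open Matrix

/-- The 3×2 matrix whose two columns are `v` and `x`. -/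
def colVX (v x : Fin 3 → ℝ) : Matrix (Fin 3) (Fin 2) ℝ :=
  Matrix.of fun i j => ![v i, x i] j

/-- The 5×5 extended pose `[R, v, x; 0₂ₓ₃, I₂]` (block indices `Fin 3 ⊕ Fin 2`). -/
def SE23mk (R : Matrix (Fin 3) (Fin 3) ℝ) (v x : Fin 3 → ℝ) :
    Matrix (Fin 3 ⊕ Fin 2) (Fin 3 ⊕ Fin 2) ℝ :=
  Matrix.fromBlocks R (colVX v x) 0 1

/-- The 5×5 identity matrix except that its (4,5) entry equals `dt`. -/
def Fdt (dt : ℝ) : Matrix (Fin 3 ⊕ Fin 2) (Fin 3 ⊕ Fin 2) ℝ :=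
  Matrix.fromBlocks 1 0 0 !![1, dt; 0, 1]

/-- The conjugation map `Φ_dt(A) = F⁻¹ A F`. -/

lemma Fdt_mul (a b : ℝ) : Fdt a * Fdt b = Fdt (a + b) := by
  simp only [Fdt, Matrix.fromBlocks_multiply]
  norm_num
  ring

lemma Fdt_zero : Fdt 0 = 1 := by
  simp only [Fdt]
  rw [← Matrix.fromBlocks_one]
  congr 1
  ext i j
  fin_cases i <;> fin_cases j <;> simp [Matrix.one_apply]

lemma Fdt_inv (dt : ℝ) : (Fdt dt)⁻¹ = Fdt (-dt) := by
  apply Matrix.inv_eq_left_inv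
  rw [Fdt_mul]; norm_num [Fdt_zero]

noncomputable def Phidt (dt : ℝ) (A : Matrix (Fin 3 ⊕ Fin 2) (Fin 3 ⊕ Fin 2) ℝ) :
    Matrix (Fin 3 ⊕ Fin 2) (Fin 3 ⊕ Fin 2) ℝ :=
  (Fdt dt)⁻¹ * A * Fdt dt

/-- **`Φ_dt` is a group automorphism of `SE₂(3)`**: (a) it maps the extended pose with
blocks `(R, v, x)` to the one with blocks `(R, v, x + dt·v)`; (b) it is multiplicative;
(c) `Φ_dt ∘ Φ_{−dt} = id`. -/
theorem Phidt_automorphism (dt : ℝ) :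
    (∀ (R : Matrix (Fin 3) (Fin 3) ℝ) (v x : Fin 3 → ℝ),
      Phidt dt (SE23mk R v x) = SE23mk R v (x + dt • v)) ∧
    (∀ T₁ T₂ : Matrix (Fin 3 ⊕ Fin 2) (Fin 3 ⊕ Fin 2) ℝ,
      Phidt dt (T₁ * T₂) = Phidt dt T₁ * Phidt dt T₂) ∧
    (∀ A : Matrix (Fin 3 ⊕ Fin 2) (Fin 3 ⊕ Fin 2) ℝ,
      Phidt dt (Phidt (-dt) A) = A) := by
  have key : ∀ a (A : Matrix (Fin 3 ⊕ Fin 2) (Fin 3 ⊕ Fin 2) ℝ),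
      Phidt a A = Fdt (-a) * A * Fdt a := by
    intro a A; rw [Phidt, Fdt_inv]
  refine ⟨?_, ?_, ?_⟩
  · intro R v x
    rw [key]
    simp only [SE23mk, Fdt, Matrix.fromBlocks_multiply]
    norm_num
    constructor
    · ext i j
      fin_cases j <;>
        simp [colVX, Matrix.mul_apply, Fin.sum_univ_two, Pi.add_apply, Pi.smul_apply,
          smul_eq_mul]
      ring
    · ext i j
      fin_cases i <;> fin_cases j <;>
        simp [Matrix.mul_apply, Fin.sum_univ_two]
  · intro T₁ T₂
    simp only [key, Matrix.mul_assoc]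
    congr 2
    rw [← Matrix.mul_assoc, ← Matrix.mul_assoc, Fdt_mul]
    norm_num [Fdt_zero]
  · intro A
    simp only [key, neg_neg, Matrix.mul_assoc]
    rw [← Matrix.mul_assoc (Fdt (-dt)), Fdt_mul]
    norm_num [Fdt_zero]
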